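/- An element a of a complex unital Banach algebra A has a g-Drazin inverse if and only if there exists an invertible u ∈ A commuting with a such that a − a²u is quasinilpotent. -/

import Mathlib

open Filter Finset

open scoped ENNReal NNReal Topology

/-- An element of a complex (Banach) algebra is quasinilpotent if its spectral radius is zero. -/
noncomputable def Quasinilpotent {A : Type*} [Ring A] [Algebra ℂ A] (q : A) : Prop :=
  spectralRadius ℂ q = 0

/-- `a` has a generalized Drazin inverse: some `b` with `ab = ba`, `b = bab`,
and `a - a²b` quasinilpotent. -/
noncomputable def HasGDrazin {A : Type*} [Ring A] [Algebra ℂ A] (a : A) : Prop :=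
  ∃ b : A, a * b = b * a ∧ b = b * a * b ∧ Quasinilpotent (a - a ^ 2 * b)

lemma descPoch_half (n : ℕ) :
    (descPochhammer ℤ n).smeval (-(2⁻¹) : ℚ) =
      (-(4⁻¹) : ℚ)^n * n.centralBinom * n.factorial := by
  induction n with
  | zero => simp [descPochhammer_zero, Polynomial.smeval_one, Nat.centralBinom_zero]
  | succ n ih =>
    rw [descPochhammer_succ_right, Polynomial.smeval_mul, ih, Polynomial.smeval_sub,
      Polynomial.smeval_X, Polynomial.smeval_natCast]
    have key : ((n:ℚ) + 1) * ((n+1).centralBinom : ℚ) = 2 * (2*n+1) * (n.centralBinom : ℚ) := by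
      exact_mod_cast congrArg (Nat.cast (R := ℚ)) (Nat.succ_mul_centralBinom_succ n)
    rw [Nat.factorial_succ]
    push_cast
    linear_combination ((-(4⁻¹:ℚ))^n * n.factorial * (4⁻¹)) * key

lemma descPoch_negone (n : ℕ) :
    (descPochhammer ℤ n).smeval (-1 : ℚ) = (-1 : ℚ)^n * n.factorial := by
  induction n with
  | zero => simp [descPochhammer_zero, Polynomial.smeval_one]
  | succ n ih =>
    rw [descPochhammer_succ_right, Polynomial.smeval_mul, ih, Polynomial.smeval_sub,
      Polynomial.smeval_X, Polynomial.smeval_natCast]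
    rw [Nat.factorial_succ]
    push_cast
    ring

lemma choose_half (n : ℕ) :
    Ring.choose (-(2⁻¹) : ℚ) n = (-(4⁻¹) : ℚ)^n * n.centralBinom := by
  have h := Ring.descPochhammer_eq_factorial_smul_choose (R := ℚ) (-(2⁻¹)) n
  rw [descPoch_half, nsmul_eq_mul] at h
  have hfac : ((n.factorial : ℚ)) ≠ 0 := by exact_mod_cast n.factorial_ne_zero
  refine mul_left_cancel₀ hfac ?_
  rw [← h]; ring

lemma choose_negone (n : ℕ) :
    Ring.choose (-1 : ℚ) n = (-1 : ℚ)^n := by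
  have h := Ring.descPochhammer_eq_factorial_smul_choose (R := ℚ) (-1) n
  rw [descPoch_negone, nsmul_eq_mul] at h
  refine mul_left_cancel₀ (show ((n.factorial : ℚ)) ≠ 0 by exact_mod_cast n.factorial_ne_zero) ?_
  rw [← h]; ring

lemma centralBinom_conv (n : ℕ) :
    ∑ ij ∈ antidiagonal n, Nat.centralBinom ij.1 * Nat.centralBinom ij.2 = 4^n := by
  have h := Ring.add_choose_eq (R := ℚ) (r := -(2⁻¹)) (s := -(2⁻¹)) n (Commute.all _ _)
  rw [show (-(2⁻¹) + -(2⁻¹) : ℚ) = -1 by norm_num, choose_negone] at h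
  simp only [choose_half] at h
  have h2 : ((-1:ℚ))^n = (-(4⁻¹):ℚ)^n *
      ∑ ij ∈ antidiagonal n, (Nat.centralBinom ij.1 : ℚ) * Nat.centralBinom ij.2 := by
    rw [h, Finset.mul_sum]
    refine Finset.sum_congr rfl fun ij hij => ?_
    have hij' : ij.1 + ij.2 = n := mem_antidiagonal.mp hij
    rw [← hij', pow_add]
    ring
  have h3 : ((∑ ij ∈ antidiagonal n, Nat.centralBinom ij.1 * Nat.centralBinom ij.2 : ℕ) : ℚ)
      = ((4^n : ℕ) : ℚ) := by
    push_cast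
    have h4 : ((-4:ℚ))^n * ((-1:ℚ))^n = 4^n := by
      rw [← mul_pow]; norm_num
    calc (∑ ij ∈ antidiagonal n, (Nat.centralBinom ij.1 : ℚ) * Nat.centralBinom ij.2)
        = ((-4:ℚ))^n * ((-(4⁻¹):ℚ)^n *
            ∑ ij ∈ antidiagonal n, (Nat.centralBinom ij.1 : ℚ) * Nat.centralBinom ij.2) := by
          rw [← mul_assoc, ← mul_pow]; norm_num
      _ = ((-4:ℚ))^n * ((-1:ℚ))^n := by rw [← h2]
      _ = 4^n := h4
  exact_mod_cast h3

lemma centralBinom_le_four_pow (n : ℕ) : Nat.centralBinom n ≤ 4^n := by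
  have h := centralBinom_conv n
  have hmem : ((n, 0) : ℕ × ℕ) ∈ antidiagonal n := by simp
  calc Nat.centralBinom n = Nat.centralBinom n * Nat.centralBinom 0 := by
        simp [Nat.centralBinom_zero]
    _ ≤ ∑ ij ∈ antidiagonal n, Nat.centralBinom ij.1 * Nat.centralBinom ij.2 :=
        Finset.single_le_sum (f := fun ij : ℕ × ℕ => Nat.centralBinom ij.1 * Nat.centralBinom ij.2)
          (fun i _ => Nat.zero_le _) hmem
    _ = 4^n := h

lemma norm_pow_le_aux {A : Type*} [SeminormedRing A] (x : A) (n : ℕ) :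
    ‖x^n‖ ≤ (1 + ‖(1:A)‖) * ‖x‖^n := by
  rcases n with _ | n
  · simp only [pow_zero, mul_one]
    linarith [norm_nonneg (1:A)]
  · calc ‖x^(n+1)‖ ≤ ‖x‖^(n+1) := norm_pow_le' x n.succ_pos
      _ ≤ (1 + ‖(1:A)‖) * ‖x‖^(n+1) := by
          nlinarith [pow_nonneg (norm_nonneg x) (n+1), norm_nonneg (1:A)]

section Quasi
variable {A : Type*} [NormedRing A] [NormedAlgebra ℂ A] [CompleteSpace A]

lemma quasi_bound {q : A} (hq : Quasinilpotent q) {ε : ℝ} (hε : 0 < ε) :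
    ∃ C : ℝ, 0 < C ∧ ∀ n : ℕ, ‖q ^ n‖ ≤ C * ε ^ n := by
  have ht := spectrum.pow_nnnorm_pow_one_div_tendsto_nhds_spectralRadius q
  rw [Quasinilpotent] at hq
  rw [hq] at ht
  have hε' : (0:ℝ≥0∞) < ENNReal.ofReal ε := by simpa using hε
  have hev : ∀ᶠ n : ℕ in atTop, (‖q ^ n‖₊ : ℝ≥0∞) ^ (1/(n:ℝ)) < ENNReal.ofReal ε :=
    ht.eventually_lt_const hε'
  obtain ⟨N, hN⟩ := eventually_atTop.mp hev
  have key : ∀ n : ℕ, N + 1 ≤ n → ‖q ^ n‖ ≤ ε ^ n := by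
    intro n hn
    have h1 := (hN n (by omega)).le
    have hn0 : (n:ℝ) ≠ 0 := by
      have : 0 < n := by omega
      exact_mod_cast this.ne'
    have h2 : ((‖q ^ n‖₊ : ℝ≥0∞) ^ (1/(n:ℝ))) ^ (n:ℝ) ≤ (ENNReal.ofReal ε) ^ (n:ℝ) :=
      ENNReal.rpow_le_rpow h1 (by positivity)
    rw [← ENNReal.rpow_mul, one_div, inv_mul_cancel₀ hn0, ENNReal.rpow_one] at h2
    rw [ENNReal.rpow_natCast, ← ENNReal.ofReal_pow hε.le] at h2
    rw [← ENNReal.ofReal_coe_nnreal, coe_nnnorm] at h2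
    rwa [ENNReal.ofReal_le_ofReal_iff (by positivity)] at h2
  have hS : 0 ≤ ∑ k ∈ range (N+1), ‖q ^ k‖ / ε ^ k :=
    Finset.sum_nonneg fun k _ => by positivity
  refine ⟨1 + ∑ k ∈ range (N+1), ‖q ^ k‖ / ε ^ k, by linarith, fun n => ?_⟩
  rcases le_or_gt (N+1) n with hcase | hcase
  · have h1 := key n hcase
    nlinarith [mul_nonneg hS (pow_pos hε n).le, pow_pos hε n]
  · have hmem : n ∈ range (N+1) := by simpa using by omega
    have hle : ‖q ^ n‖ / ε ^ n ≤ ∑ k ∈ range (N+1), ‖q ^ k‖ / ε ^ k :=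
      Finset.single_le_sum (f := fun k => ‖q ^ k‖ / ε ^ k) (fun k _ => by positivity) hmem
    have hεn : (0:ℝ) < ε ^ n := pow_pos hε n
    rw [div_le_iff₀ hεn] at hle
    nlinarith
lemma quasi_of_bound {q : A}
    (h : ∀ ε : ℝ, 0 < ε → ∃ C : ℝ, 0 < C ∧ ∀ n : ℕ, ‖q ^ n‖ ≤ C * ε ^ n) :
    Quasinilpotent q := by
  rw [Quasinilpotent]
  by_contra h0
  have hpos : 0 < spectralRadius ℂ q := zero_lt_iff.mpr h0
  obtain ⟨ρ, hρ0, hρ⟩ := ENNReal.lt_iff_exists_nnreal_btwn.mp hpos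
  have hρ0' : (0:ℝ) < (ρ:ℝ) := by
    rcases eq_or_lt_of_le (show (0:ℝ≥0) ≤ ρ from zero_le) with h' | h'
    · exfalso; rw [← h'] at hρ0; simp at hρ0
    · exact_mod_cast h'
  obtain ⟨C, hC, hCb⟩ := h ((ρ:ℝ)/2) (by positivity)
  obtain ⟨N, hN⟩ := eventually_atTop.mp
    (ENNReal.eventually_pow_one_div_le
      (x := ENNReal.ofReal C * (‖(1:A)‖₊ : ℝ≥0∞))
      (ENNReal.mul_ne_top ENNReal.ofReal_ne_top ENNReal.coe_ne_top) (y := 2) ENNReal.one_lt_two)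
  have key := spectrum.spectralRadius_le_pow_nnnorm_pow_one_div ℂ q N
  have hb : (‖q ^ (N+1)‖₊ : ℝ≥0∞) ≤ ENNReal.ofReal C * (ENNReal.ofReal ((ρ:ℝ)/2))^(N+1) := by
    rw [← ENNReal.ofReal_coe_nnreal, coe_nnnorm, ← ENNReal.ofReal_pow (by positivity),
      ← ENNReal.ofReal_mul hC.le]
    exact ENNReal.ofReal_le_ofReal (hCb (N+1))
  have hstep : spectralRadius ℂ q ≤
      (ENNReal.ofReal C * (‖(1:A)‖₊ : ℝ≥0∞))^(1/((N:ℝ)+1)) * ENNReal.ofReal ((ρ:ℝ)/2) := by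
    refine key.trans ?_
    have h1 : (‖q ^ (N+1)‖₊ : ℝ≥0∞) ^ (1/((N:ℝ)+1)) ≤
        ((ENNReal.ofReal C)^(1/((N:ℝ)+1))) * ENNReal.ofReal ((ρ:ℝ)/2) := by
      calc (‖q ^ (N+1)‖₊ : ℝ≥0∞) ^ (1/((N:ℝ)+1))
          ≤ (ENNReal.ofReal C * (ENNReal.ofReal ((ρ:ℝ)/2))^(N+1)) ^ (1/((N:ℝ)+1)) :=
            ENNReal.rpow_le_rpow hb (by positivity)
        _ = ((ENNReal.ofReal C)^(1/((N:ℝ)+1))) * ENNReal.ofReal ((ρ:ℝ)/2) := by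
            rw [ENNReal.mul_rpow_of_nonneg _ _ (by positivity)]
            congr 1
            rw [← ENNReal.rpow_natCast (ENNReal.ofReal ((ρ:ℝ)/2)) (N+1), ← ENNReal.rpow_mul]
            push_cast
            rw [mul_one_div, div_self (by positivity), ENNReal.rpow_one]
    calc (‖q ^ (N+1)‖₊ : ℝ≥0∞) ^ (1/((N:ℝ)+1)) * (‖(1:A)‖₊ : ℝ≥0∞) ^ (1/((N:ℝ)+1))
        ≤ (((ENNReal.ofReal C)^(1/((N:ℝ)+1))) * ENNReal.ofReal ((ρ:ℝ)/2)) *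
            (‖(1:A)‖₊ : ℝ≥0∞) ^ (1/((N:ℝ)+1)) := by
          exact mul_le_mul_left h1 _
      _ = (ENNReal.ofReal C * (‖(1:A)‖₊ : ℝ≥0∞))^(1/((N:ℝ)+1)) * ENNReal.ofReal ((ρ:ℝ)/2) := by
          rw [ENNReal.mul_rpow_of_nonneg _ _ (by positivity)]
          ring
  have h2le : (ENNReal.ofReal C * (‖(1:A)‖₊ : ℝ≥0∞))^(1/((N:ℝ)+1)) ≤ 2 := by
    have := hN (N+1) (by omega)
    convert this using 2
    push_cast
    ring
  have hfinal : spectralRadius ℂ q ≤ (ρ : ℝ≥0∞) := by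
    refine hstep.trans ?_
    calc (ENNReal.ofReal C * (‖(1:A)‖₊ : ℝ≥0∞))^(1/((N:ℝ)+1)) * ENNReal.ofReal ((ρ:ℝ)/2)
        ≤ 2 * ENNReal.ofReal ((ρ:ℝ)/2) := mul_le_mul_left h2le _
      _ = ENNReal.ofReal (2 * ((ρ:ℝ)/2)) := by
          rw [ENNReal.ofReal_mul (by norm_num)]
          norm_num
      _ = (ρ : ℝ≥0∞) := by
          rw [show 2 * ((ρ:ℝ)/2) = (ρ:ℝ) by ring, ENNReal.ofReal_coe_nnreal]
  exact absurd hfinal (not_le.mpr hρ)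

lemma quasi_mul {x q : A} (hc : Commute x q) (hq : Quasinilpotent q) :
    Quasinilpotent (x * q) := by
  apply quasi_of_bound
  intro ε hε
  obtain ⟨C, hC, hCb⟩ := quasi_bound hq (show (0:ℝ) < ε / (‖x‖ + 1) by positivity)
  refine ⟨(1 + ‖(1:A)‖) * C, by positivity, fun n => ?_⟩
  have h1 : (x*q)^n = x^n * q^n := hc.mul_pow n
  have hxq : ‖x‖ * (ε / (‖x‖ + 1)) ≤ ε := by
    rw [mul_div_assoc']
    rw [div_le_iff₀ (by positivity)]
    nlinarith [norm_nonneg x]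
  calc ‖(x*q)^n‖ = ‖x^n * q^n‖ := by rw [h1]
    _ ≤ ‖x^n‖ * ‖q^n‖ := norm_mul_le _ _
    _ ≤ ((1 + ‖(1:A)‖) * ‖x‖^n) * (C * (ε / (‖x‖ + 1))^n) := by
        have := norm_pow_le_aux x n
        have := hCb n
        have h3 : (0:ℝ) ≤ ‖x^n‖ := norm_nonneg _
        have h4 : (0:ℝ) ≤ ‖q^n‖ := norm_nonneg _
        have h5 : (0:ℝ) ≤ (1 + ‖(1:A)‖) * ‖x‖^n := by positivity
        nlinarith
    _ = ((1 + ‖(1:A)‖) * C) * (‖x‖ * (ε / (‖x‖ + 1)))^n := by rw [mul_pow]; ring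
    _ ≤ ((1 + ‖(1:A)‖) * C) * ε^n :=
        mul_le_mul_of_nonneg_left (pow_le_pow_left₀ (by positivity) hxq n) (by positivity)
end Quasi

lemma neumann {B : Type*} [NormedRing B] [CompleteSpace B] {k : B} {C : ℝ}
    (hk : ∀ n : ℕ, ‖k^n‖ ≤ C * (2⁻¹:ℝ)^n) :
    Summable (fun n : ℕ => k^n) ∧ (1 - k) * (∑' n : ℕ, k^n) = 1 ∧
      (∑' n : ℕ, k^n) * (1 - k) = 1 := by
  have hgeo : Summable (fun n : ℕ => C * (2⁻¹:ℝ)^n) :=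
    (summable_geometric_of_lt_one (by norm_num) (by norm_num)).mul_left C
  have hs : Summable (fun n : ℕ => k^n) := Summable.of_norm_bounded hgeo hk
  have hT : Tendsto (fun N => ∑ i ∈ range N, k ^ i) atTop (𝓝 (∑' n : ℕ, k^n)) :=
    hs.hasSum.tendsto_sum_nat
  have hk0 : Tendsto (fun N : ℕ => k ^ N) atTop (𝓝 0) := by
    refine squeeze_zero_norm hk ?_
    have := tendsto_pow_atTop_nhds_zero_of_lt_one (show (0:ℝ) ≤ 2⁻¹ by norm_num)
      (show (2⁻¹:ℝ) < 1 by norm_num)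
    simpa using this.const_mul C
  have h3 : Tendsto (fun N : ℕ => 1 - k ^ N) atTop (𝓝 1) := by
    have := tendsto_const_nhds (x := (1:B)) (f := atTop (α := ℕ)) |>.sub hk0
    simpa using this
  refine ⟨hs, ?_, ?_⟩
  · have h1 : Tendsto (fun N => (1 - k) * ∑ i ∈ range N, k ^ i) atTop
        (𝓝 ((1 - k) * ∑' n : ℕ, k^n)) := hT.const_mul _
    have h2 : ∀ N, (1 - k) * ∑ i ∈ range N, k ^ i = 1 - k ^ N := by
      intro N
      have hg := mul_geom_sum k N
      have : (1 - k) * ∑ i ∈ range N, k ^ i = -((k - 1) * ∑ i ∈ range N, k ^ i) := by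
        noncomm_ring
      rw [this, hg]; noncomm_ring
    simp_rw [h2] at h1
    exact tendsto_nhds_unique h1 h3
  · have h1 : Tendsto (fun N => (∑ i ∈ range N, k ^ i) * (1 - k)) atTop
        (𝓝 ((∑' n : ℕ, k^n) * (1 - k))) := hT.mul_const _
    have h2 : ∀ N, (∑ i ∈ range N, k ^ i) * (1 - k) = 1 - k ^ N := by
      intro N
      have hg := geom_sum_mul k N
      have : (∑ i ∈ range N, k ^ i) * (1 - k) = -((∑ i ∈ range N, k ^ i) * (k - 1)) := by
        noncomm_ring
      rw [this, hg]; noncomm_ring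
    simp_rw [h2] at h1
    exact tendsto_nhds_unique h1 h3

section DC
variable {A : Type*} [NormedRing A] [NormedAlgebra ℂ A]

/-- The double centralizer of a pair of elements. -/
def DCentral (a u : A) : Subalgebra ℂ A :=
  Subalgebra.centralizer ℂ (Set.centralizer {a, u})

variable {a u : A}

lemma a_mem_c (h : Commute a u) : a ∈ Set.centralizer {a, u} := by
  rw [Set.mem_centralizer_iff]
  rintro m hm
  rcases hm with rfl | rfl
  · rfl
  · exact h.symm.eq

lemma u_mem_c (h : Commute a u) : u ∈ Set.centralizer {a, u} := by
  rw [Set.mem_centralizer_iff]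
  rintro m hm
  rcases hm with rfl | rfl
  · exact h.eq
  · rfl

lemma mem_DC_a (h : Commute a u) : a ∈ DCentral a u :=
  Subalgebra.mem_centralizer_iff ℂ |>.mpr fun g hg =>
    (Set.mem_centralizer_iff.mp hg a (by simp)).symm

lemma mem_DC_u (h : Commute a u) : u ∈ DCentral a u :=
  Subalgebra.mem_centralizer_iff ℂ |>.mpr fun g hg =>
    (Set.mem_centralizer_iff.mp hg u (by simp)).symm

lemma DC_le (h : Commute a u) {x : A} (hx : x ∈ DCentral a u) :
    x ∈ Set.centralizer {a, u} := by
  rw [Set.mem_centralizer_iff]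
  rintro m hm
  rcases hm with rfl | rfl
  · exact (Subalgebra.mem_centralizer_iff ℂ |>.mp hx m (a_mem_c h))
  · exact (Subalgebra.mem_centralizer_iff ℂ |>.mp hx m (u_mem_c h))

lemma DC_comm (h : Commute a u) (x y : DCentral a u) : x * y = y * x :=
  Subtype.ext ((Subalgebra.mem_centralizer_iff ℂ |>.mp x.2 y.1 (DC_le h y.2)).symm)

lemma DC_isClosed : IsClosed ((DCentral a u : Subalgebra ℂ A) : Set A) := by
  have hEq : ((DCentral a u : Subalgebra ℂ A) : Set A) =
      ⋂ g ∈ Set.centralizer {a, u}, {x : A | g * x = x * g} := by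
    ext x
    simp only [SetLike.mem_coe, Set.mem_iInter, Set.mem_setOf_eq]
    exact Subalgebra.mem_centralizer_iff ℂ
  rw [hEq]
  exact isClosed_biInter fun g hg =>
    isClosed_eq (continuous_const.mul continuous_id) (continuous_id.mul continuous_const)

lemma DC_inv_mem {x : A} (hx : x ∈ DCentral a u) (hxu : IsUnit x) :
    (↑hxu.unit⁻¹ : A) ∈ DCentral a u := by
  unfold DCentral at hx ⊢
  rw [Subalgebra.mem_centralizer_iff] at hx ⊢
  intro g hg
  have h1 : Commute g x := hx g hg
  have h2 : Commute g (hxu.unit : A) := by rwa [IsUnit.unit_spec]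
  exact h2.units_inv_right.eq

end DC

lemma core {B : Type*} [NormedCommRing B] [NormedAlgebra ℂ B] [CompleteSpace B]
    (a u v : B) (huv : u * v = 1)
    (hbd : ∀ ε : ℝ, 0 < ε → ∃ C : ℝ, 0 < C ∧ ∀ n : ℕ, ‖(a*u - (a*u)^2)^n‖ ≤ C * ε^n) :
    ∃ b w : B, b * a * b = b ∧ a - a^2 * b = w * (a*u - (a*u)^2) := by
  obtain ⟨h, h2⟩ : ∃ h : B, h * 2 = 1 := by
    refine ⟨(2⁻¹:ℂ) • (1:B), ?_⟩
    rw [smul_mul_assoc, one_mul]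
    rw [show (2:B) = (2:ℂ) • (1:B) by rw [two_smul]; norm_num]
    rw [smul_smul]
    norm_num
  obtain ⟨C, hC, hCb⟩ := hbd 8⁻¹ (by norm_num)
  obtain ⟨s, m, hsm, hss1⟩ : ∃ s m : B, s = 1 + (a*u - (a*u)^2) * m ∧
      s * s * (1 - 4*(a*u - (a*u)^2)) = 1 := by
    set t : B := a*u - (a*u)^2 with htdef
    have hfb : ∀ n : ℕ, ‖(Nat.centralBinom n : B) * t^n‖ ≤ (‖(1:B)‖ * C) * (2⁻¹:ℝ)^n := by
      intro n
      have h1 : ‖(Nat.centralBinom n : B)‖ ≤ (Nat.centralBinom n : ℝ) * ‖(1:B)‖ :=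
        Nat.norm_cast_le _
      have h2' : (Nat.centralBinom n : ℝ) ≤ 4^n := by
        exact_mod_cast centralBinom_le_four_pow n
      have h3 : ‖t^n‖ ≤ C * (8⁻¹:ℝ)^n := hCb n
      calc ‖(Nat.centralBinom n : B) * t^n‖ ≤ ‖(Nat.centralBinom n : B)‖ * ‖t^n‖ :=
            norm_mul_le _ _
        _ ≤ ((Nat.centralBinom n : ℝ) * ‖(1:B)‖) * (C * (8⁻¹:ℝ)^n) := by
            gcongr
        _ ≤ ((4:ℝ)^n * ‖(1:B)‖) * (C * (8⁻¹:ℝ)^n) := by gcongr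
        _ = (‖(1:B)‖ * C) * ((4:ℝ)^n * (8⁻¹:ℝ)^n) := by ring
        _ = (‖(1:B)‖ * C) * (2⁻¹:ℝ)^n := by rw [← mul_pow]; norm_num
    have hgeo : Summable (fun n : ℕ => (‖(1:B)‖ * C) * (2⁻¹:ℝ)^n) :=
      (summable_geometric_of_lt_one (by norm_num) (by norm_num)).mul_left _
    have hfn : Summable (fun n : ℕ => ‖(Nat.centralBinom n : B) * t^n‖) :=
      Summable.of_nonneg_of_le (fun _ => norm_nonneg _) hfb hgeo
    have hf : Summable (fun n : ℕ => (Nat.centralBinom n : B) * t^n) := hfn.of_norm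
    have hfb' : ∀ n : ℕ, ‖(Nat.centralBinom (n+1) : B) * t^n‖ ≤
        ((4*‖(1:B)‖) * C) * (2⁻¹:ℝ)^n := by
      intro n
      have h1 : ‖(Nat.centralBinom (n+1) : B)‖ ≤ (Nat.centralBinom (n+1) : ℝ) * ‖(1:B)‖ :=
        Nat.norm_cast_le _
      have h2' : (Nat.centralBinom (n+1) : ℝ) ≤ 4^(n+1) := by
        exact_mod_cast centralBinom_le_four_pow (n+1)
      have h3 : ‖t^n‖ ≤ C * (8⁻¹:ℝ)^n := hCb n
      calc ‖(Nat.centralBinom (n+1) : B) * t^n‖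
          ≤ ‖(Nat.centralBinom (n+1) : B)‖ * ‖t^n‖ := norm_mul_le _ _
        _ ≤ ((Nat.centralBinom (n+1) : ℝ) * ‖(1:B)‖) * (C * (8⁻¹:ℝ)^n) := by
            gcongr
        _ ≤ ((4:ℝ)^(n+1) * ‖(1:B)‖) * (C * (8⁻¹:ℝ)^n) := by gcongr
        _ = ((4*‖(1:B)‖) * C) * ((4:ℝ)^n * (8⁻¹:ℝ)^n) := by ring
        _ = ((4*‖(1:B)‖) * C) * (2⁻¹:ℝ)^n := by rw [← mul_pow]; norm_num
    have hmn : Summable (fun n : ℕ => ‖(Nat.centralBinom (n+1) : B) * t^n‖) :=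
      Summable.of_nonneg_of_le (fun _ => norm_nonneg _) hfb'
        ((summable_geometric_of_lt_one (by norm_num) (by norm_num)).mul_left _)
    have hm : Summable (fun n : ℕ => (Nat.centralBinom (n+1) : B) * t^n) := hmn.of_norm
    refine ⟨∑' n : ℕ, (Nat.centralBinom n : B) * t^n,
      ∑' n : ℕ, (Nat.centralBinom (n+1) : B) * t^n, ?_, ?_⟩
    · rw [Summable.tsum_eq_zero_add hf]
      congr 1
      · simp [Nat.centralBinom_zero]
      · rw [← Summable.tsum_mul_left t hm]
        exact tsum_congr fun n => by ring
    · have hknorm : ∀ n : ℕ, ‖(4*t : B)^n‖ ≤ (‖(1:B)‖ * C) * (2⁻¹:ℝ)^n := by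
        intro n
        rw [mul_pow]
        have h4 : ‖((4:B))^n‖ ≤ (4:ℝ)^n * ‖(1:B)‖ := by
          have : ((4:B))^n = ((4^n : ℕ) : B) := by push_cast; ring
          rw [this]
          have := Nat.norm_cast_le (α := B) (4^n)
          calc ‖((4^n : ℕ) : B)‖ ≤ ((4^n : ℕ) : ℝ) * ‖(1:B)‖ := this
            _ = (4:ℝ)^n * ‖(1:B)‖ := by push_cast; ring
        calc ‖(4:B)^n * t^n‖ ≤ ‖(4:B)^n‖ * ‖t^n‖ := norm_mul_le _ _
          _ ≤ ((4:ℝ)^n * ‖(1:B)‖) * (C * (8⁻¹:ℝ)^n) :=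
              mul_le_mul h4 (hCb n) (norm_nonneg _) (by positivity)
          _ = (‖(1:B)‖ * C) * ((4:ℝ)^n * (8⁻¹:ℝ)^n) := by ring
          _ = (‖(1:B)‖ * C) * (2⁻¹:ℝ)^n := by rw [← mul_pow]; norm_num
      obtain ⟨hsum4, hneu1, hneu2⟩ := neumann hknorm
      have hcauchy := tsum_mul_tsum_eq_tsum_sum_antidiagonal_of_summable_norm hfn hfn
      have hconv : (∑' n : ℕ, ∑ ij ∈ antidiagonal n,
          ((Nat.centralBinom ij.1 : B) * t^ij.1) * ((Nat.centralBinom ij.2 : B) * t^ij.2))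
          = ∑' n : ℕ, (4*t : B)^n := by
        refine tsum_congr fun n => ?_
        have hterm : ∀ ij ∈ antidiagonal n,
            ((Nat.centralBinom ij.1 : B) * t^ij.1) * ((Nat.centralBinom ij.2 : B) * t^ij.2)
              = ((Nat.centralBinom ij.1 * Nat.centralBinom ij.2 : ℕ) : B) * t^n := by
          intro ij hij
          have hij' := mem_antidiagonal.mp hij
          push_cast
          rw [← hij']
          ring
        rw [Finset.sum_congr rfl hterm, ← Finset.sum_mul, ← Nat.cast_sum, centralBinom_conv n,
          mul_pow]
        push_cast
        ring
      rw [hcauchy, hconv]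
      exact hneu2
  -- algebraic part
  have hcs : (((1:B) - 2*(a*u)) * s) * (((1:B) - 2*(a*u)) * s) = 1 := by
    linear_combination hss1
  have hpe0 : h * (1 - ((1:B) - 2*(a*u)) * s)
      = a*u + (a*u - (a*u)^2) * (-(h * (((1:B) - 2*(a*u)) * m))) := by
    linear_combination (-(h*((1:B) - 2*(a*u)))) * hsm + (a*u) * h2
  have hp0 : (h * (1 - ((1:B) - 2*(a*u)) * s)) * (h * (1 - ((1:B) - 2*(a*u)) * s))
      = h * (1 - ((1:B) - 2*(a*u)) * s) := by
    linear_combination (h*h) * hcs + (h*(1 - ((1:B) - 2*(a*u))*s)) * h2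
  obtain ⟨p, w0, hp, hpe⟩ : ∃ p w0 : B, p * p = p ∧ p = a*u + (a*u - (a*u)^2) * w0 :=
    ⟨_, _, hp0, hpe0⟩
  obtain ⟨Cz, hCz, hCzb⟩ := hbd ((2*(‖((1:B) + w0*(1 - a*u))‖+1))⁻¹) (by positivity)
  have hk2 : ∀ n : ℕ, ‖((a*u - (a*u)^2) * ((1:B) + w0*(1 - a*u)))^n‖
      ≤ ((1+‖(1:B)‖)*Cz) * (2⁻¹:ℝ)^n := by
    intro n
    rw [mul_pow]
    have hz : ‖((1:B) + w0*(1 - a*u))^n‖ ≤ (1+‖(1:B)‖) * ‖((1:B) + w0*(1 - a*u))‖^n :=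
      norm_pow_le_aux _ n
    have ht : ‖((a*u - (a*u)^2))^n‖ ≤ Cz * ((2*(‖((1:B) + w0*(1 - a*u))‖+1))⁻¹)^n := hCzb n
    have hze : ‖((1:B) + w0*(1 - a*u))‖ * (2*(‖((1:B) + w0*(1 - a*u))‖+1))⁻¹ ≤ 2⁻¹ := by
      have h0 : (0:ℝ) < 2*(‖((1:B) + w0*(1 - a*u))‖+1) := by positivity
      rw [inv_eq_one_div, inv_eq_one_div, mul_one_div, div_le_div_iff₀ h0 (by norm_num)]
      nlinarith [norm_nonneg ((1:B) + w0*(1 - a*u))]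
    calc ‖((a*u - (a*u)^2))^n * (((1:B) + w0*(1 - a*u)))^n‖
        ≤ ‖((a*u - (a*u)^2))^n‖ * ‖(((1:B) + w0*(1 - a*u)))^n‖ := norm_mul_le _ _
      _ ≤ (Cz * ((2*(‖((1:B) + w0*(1 - a*u))‖+1))⁻¹)^n) *
            ((1+‖(1:B)‖) * ‖((1:B) + w0*(1 - a*u))‖^n) :=
          mul_le_mul ht hz (norm_nonneg _) (by positivity)
      _ = ((1+‖(1:B)‖)*Cz) *
            ((‖((1:B) + w0*(1 - a*u))‖ * (2*(‖((1:B) + w0*(1 - a*u))‖+1))⁻¹)^n) := by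
          rw [mul_pow]; ring
      _ ≤ ((1+‖(1:B)‖)*Cz) * (2⁻¹:ℝ)^n :=
          mul_le_mul_of_nonneg_left (pow_le_pow_left₀ (by positivity) hze n) (by positivity)
  obtain ⟨hsumk2, hy1, hy2⟩ := neumann hk2
  have hd : (a*u)*p + 1 - p = 1 - (a*u - (a*u)^2) * ((1:B) + w0*(1 - a*u)) := by
    rw [hpe]; ring
  have hdy : ((a*u)*p + 1 - p) *
      (∑' n : ℕ, ((a*u - (a*u)^2) * ((1:B) + w0*(1 - a*u)))^n) = 1 := by
    rw [hd]; exact hy1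
  set Y : B := ∑' n : ℕ, ((a*u - (a*u)^2) * ((1:B) + w0*(1 - a*u)))^n with hY
  have h1 : (1-p) * ((a*u)*p + 1 - p) = 1-p := by linear_combination (1 - a*u) * hp
  have h2' : (1-p) * Y = 1-p := by
    calc (1-p) * Y = ((1-p) * ((a*u)*p + 1 - p)) * Y := by rw [h1]
      _ = (1-p) * (((a*u)*p + 1 - p) * Y) := by ring
      _ = (1-p) * 1 := by rw [hdy]
      _ = 1-p := mul_one _
  have hepy : (a*u)*p*Y = p := by linear_combination hdy - h2'
  have hab : a * (u * (p * Y)) = p := by linear_combination hepy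
  refine ⟨u * (p * Y), v * (1 - (a*u)*w0), ?_, ?_⟩
  · linear_combination (u*(p*Y)) * hab + (u*Y) * hp
  · linear_combination (-a) * hab + (-a) * hpe + (-a + a^2*u + a^2*u*w0 - a^3*u^2*w0) * huv

theorem stmt2 {A : Type*} [NormedRing A] [NormedAlgebra ℂ A] [CompleteSpace A] (a : A) :
    HasGDrazin a ↔ ∃ u : A, IsUnit u ∧ a * u = u * a ∧ Quasinilpotent (a - a ^ 2 * u) := by
  constructor
  · rintro ⟨b, hab, hbab, hq⟩
    have hcab : Commute a b := hab
    letI : CommRing ↥(DCentral a b) :=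
      { (inferInstance : Ring ↥(DCentral a b)) with mul_comm := fun x y => DC_comm hcab x y }
    set aE : ↥(DCentral a b) := ⟨a, mem_DC_a hcab⟩ with haE
    set bE : ↥(DCentral a b) := ⟨b, mem_DC_u hcab⟩ with hbE
    have hbabE : bE = bE * aE * bE := Subtype.ext (by simpa [haE, hbE] using hbab)
    have huvE : ((bE + 1 - aE*bE) * (aE^2*bE + 1 - aE*bE) : ↥(DCentral a b)) = 1 := by
      linear_combination (aE - 1)^2 * hbabE
    have hvuE : ((aE^2*bE + 1 - aE*bE) * (bE + 1 - aE*bE) : ↥(DCentral a b)) = 1 := by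
      linear_combination (aE - 1)^2 * hbabE
    have huvA : (b + 1 - a*b) * (a^2*b + 1 - a*b) = 1 := by
      simpa [haE, hbE] using congrArg Subtype.val huvE
    have hvuA : (a^2*b + 1 - a*b) * (b + 1 - a*b) = 1 := by
      simpa [haE, hbE] using congrArg Subtype.val hvuE
    refine ⟨b + 1 - a*b, ⟨⟨b + 1 - a*b, a^2*b + 1 - a*b, huvA, hvuA⟩, rfl⟩, ?_, ?_⟩
    · simpa [haE, hbE] using congrArg Subtype.val (mul_comm aE (bE + 1 - aE*bE))
    · have hid : a - a^2*(b + 1 - a*b) = (1-a)*(a - a^2*b) := by noncomm_ring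
      rw [hid]
      have c1 : Commute a (a - a^2*b) :=
        (Commute.refl a).sub_right (((Commute.refl a).pow_right 2).mul_right hcab)
      exact quasi_mul ((Commute.one_left _).sub_left c1) hq
  · rintro ⟨u, hu, hau, hq⟩
    have hcau : Commute a u := hau
    letI : NormedCommRing ↥(DCentral a u) :=
      { (inferInstance : NormedRing ↥(DCentral a u)) with
        mul_comm := fun x y => DC_comm hcau x y }
    letI : CompleteSpace ↥(DCentral a u) :=
      (DC_isClosed (a := a) (u := u)).completeSpace_coe
    set aE : ↥(DCentral a u) := ⟨a, mem_DC_a hcau⟩ with haE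
    set uE : ↥(DCentral a u) := ⟨u, mem_DC_u hcau⟩ with huE
    set vE : ↥(DCentral a u) := ⟨(↑hu.unit⁻¹ : A), DC_inv_mem (mem_DC_u hcau) hu⟩ with hvE
    have huvE : uE * vE = 1 := Subtype.ext (by simpa [huE, hvE] using hu.mul_val_inv)
    have hcu : Commute u (a - a^2*u) :=
      hcau.symm.sub_right (((hcau.symm).pow_right 2).mul_right (Commute.refl u))
    have ht : a*u - (a*u)^2 = u * (a - a^2*u) := by
      rw [hcau.mul_pow 2, mul_sub, ← hau, ← mul_assoc u (a^2) u, ((hcau.symm).pow_right 2).eq]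
      noncomm_ring
    have htq : Quasinilpotent (a*u - (a*u)^2) := by
      rw [ht]; exact quasi_mul hcu hq
    have hbdE : ∀ ε : ℝ, 0 < ε → ∃ C : ℝ, 0 < C ∧
        ∀ n : ℕ, ‖(aE*uE - (aE*uE)^2)^n‖ ≤ C * ε^n := by
      intro ε hε
      obtain ⟨C, hC, hCb⟩ := quasi_bound htq hε
      refine ⟨C, hC, fun n => ?_⟩
      have hval : (((aE*uE - (aE*uE)^2)^n : ↥(DCentral a u)) : A) = (a*u - (a*u)^2)^n := by
        push_cast [haE, huE]
        rfl
      calc ‖(aE*uE - (aE*uE)^2)^n‖ = ‖(((aE*uE - (aE*uE)^2)^n : ↥(DCentral a u)) : A)‖ := rfl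
        _ = ‖(a*u - (a*u)^2)^n‖ := by rw [hval]
        _ ≤ C * ε^n := hCb n
    obtain ⟨bE, wE, hbabE, hfinE⟩ := core aE uE vE huvE hbdE
    refine ⟨(bE : A), ?_, ?_, ?_⟩
    · simpa [haE] using congrArg Subtype.val (mul_comm aE bE)
    · simpa [haE] using (congrArg Subtype.val hbabE).symm
    · have hfinA : a - a^2*(bE : A) = (wE : A) * (a*u - (a*u)^2) := by
        simpa [haE, huE] using congrArg Subtype.val hfinE
      rw [hfinA]
      refine quasi_mul ?_ htq
      show (wE : A) * (a*u - (a*u)^2) = (a*u - (a*u)^2) * (wE : A)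
      exact congrArg Subtype.val (mul_comm wE (aE*uE - (aE*uE)^2))
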